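/- Let A_0, A_1, A_2, … be positive integers with A_n ≥ 2 for all n ≥ 1, and suppose there exist positive integers a_1, a_2, a_3, … such that, with convergents p_n/q_n defined by p_0 = 0, q_0 = 1, p_1 = 1, q_1 = a_1, p_{n+1} = a_{n+1} p_n + p_{n-1}, q_{n+1} = a_{n+1} q_n + q_{n-1}, one has Σ_{i=0}^{n} (−1)^i / (A_0 A_1 ⋯ A_i) = p_{n+1}/q_{n+1} for all n ≥ 0. Then q_n q_{n+1} = A_0 A_1 ⋯ A_n for all n ≥ 0, and q_n divides a_{n+2} for all n ≥ 0. -/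

import Mathlib

/-- If the type II series `∑ (-1)^n / (A_0 A_1 ⋯ A_n)` is equivalent to a simple
continued fraction with convergents `p_n/q_n`, then `q_n q_{n+1} = A_0 A_1 ⋯ A_n`
and `q_n ∣ a_{n+2}` for all `n ≥ 0`. -/
theorem stmt_8 (A : ℕ → ℕ) (hA0 : 0 < A 0) (hA : ∀ n : ℕ, 1 ≤ n → 2 ≤ A n)
    (a p q : ℕ → ℕ) (ha : ∀ n : ℕ, 0 < a (n + 1))
    (hp0 : p 0 = 0) (hq0 : q 0 = 1) (hp1 : p 1 = 1) (hq1 : q 1 = a 1)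
    (hp : ∀ n : ℕ, p (n + 2) = a (n + 2) * p (n + 1) + p n)
    (hq : ∀ n : ℕ, q (n + 2) = a (n + 2) * q (n + 1) + q n)
    (heq : ∀ n : ℕ,
      (∑ i ∈ Finset.range (n + 1), (-1 : ℝ) ^ i / ∏ j ∈ Finset.range (i + 1), (A j : ℝ))
        = (p (n + 1) : ℝ) / (q (n + 1) : ℝ)) :
    (∀ n : ℕ, q n * q (n + 1) = ∏ i ∈ Finset.range (n + 1), A i) ∧
    (∀ n : ℕ, q n ∣ a (n + 2)) := by
  have hApos : ∀ n, 0 < A n := by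
    intro n
    cases n with
    | zero => exact hA0
    | succ m => exact lt_of_lt_of_le (by norm_num) (hA (m+1) (Nat.succ_le_succ (Nat.zero_le m)))
  have hqpos : ∀ n, 0 < q n := by
    intro n
    induction n using Nat.twoStepInduction with
    | zero => simp [hq0]
    | one => rw [hq1]; exact ha 0
    | more n ih1 _ => exact lt_of_lt_of_le ih1 (by rw [hq]; exact Nat.le_add_left _ _)
  have det : ∀ n, (p (n+1) : ℤ) * q n - p n * q (n+1) = (-1)^n := by
    intro n
    induction n with
    | zero => simp [hp0, hq0, hp1]
    | succ m ih =>
      rw [hp m, hq m]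
      push_cast
      ring_nf
      ring_nf at ih
      linarith
  have prodpos : ∀ n, (0:ℝ) < ∏ j ∈ Finset.range (n+1), (A j : ℝ) := by
    intro n
    apply Finset.prod_pos
    intro i _
    exact_mod_cast hApos i
  have main : ∀ n, q n * q (n + 1) = ∏ i ∈ Finset.range (n + 1), A i := by
    intro n
    have key : ((q n : ℝ) * q (n+1)) = ∏ j ∈ Finset.range (n+1), (A j : ℝ) := by
      cases n with
      | zero =>
        have h0 := heq 0
        norm_num [Finset.sum_range_one, Finset.prod_range_one, hp1, hq0] at h0 ⊢
        omega
      | succ m =>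
        have h1 := heq (m+1)
        rw [Finset.sum_range_succ, heq m] at h1
        have hd : (p (m+2) : ℝ) * q (m+1) - p (m+1) * q (m+2) = (-1)^(m+1) := by
          exact_mod_cast congrArg (Int.cast : ℤ → ℝ) (det (m+1))
        have hq1 : (0:ℝ) < q (m+1) := by exact_mod_cast hqpos (m+1)
        have hq2 : (0:ℝ) < q (m+2) := by exact_mod_cast hqpos (m+2)
        have hP := prodpos (m+1)
        have hs : ((-1:ℝ))^(m+1) ≠ 0 := pow_ne_zero _ (by norm_num)
        -- from h1: p(m+2)/q(m+2) = p(m+1)/q(m+1) + (-1)^(m+1)/P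
        field_simp at h1
        -- now derive q(m+1)*q(m+2) = P
        have goal' : ((-1:ℝ))^(m+1) * (∏ j ∈ Finset.range (m+2), (A j:ℝ))
            = (-1)^(m+1) * ((q (m+1):ℝ) * q (m+2)) := by
          nlinarith [h1, hd, mul_pos hq1 hq2, hP]
        have := mul_left_cancel₀ hs goal'
        linarith
    have : ((q n * q (n+1) : ℕ) : ℝ) = ((∏ i ∈ Finset.range (n+1), A i : ℕ) : ℝ) := by
      push_cast
      exact key
    exact_mod_cast this
  have cop : ∀ n, Nat.Coprime (q n) (q (n+1)) := by
    intro n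
    induction n with
    | zero => simp [hq0, Nat.coprime_one_left]
    | succ m ih =>
      have h' := (Nat.coprime_add_mul_left_right (q (m+1)) (q m) (a (m+2))).mpr ih.symm
      have : q (m+2) = q m + q (m+1) * a (m+2) := by rw [hq m]; ring
      rwa [← this] at h'
  refine ⟨main, ?_⟩
  intro n
  have h1 := main (n+1)
  rw [Finset.prod_range_succ, ← main n] at h1
  -- q(n+1) * q(n+2) = q n * q(n+1) * A(n+1)
  have h2 : q (n+2) = q n * A (n+1) := by
    apply Nat.eq_of_mul_eq_mul_left (hqpos (n+1))
    rw [h1]; ring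
  have hA1 : 1 ≤ A (n+1) := le_trans (by norm_num) (hA (n+1) (Nat.succ_le_succ (Nat.zero_le n)))
  obtain ⟨k, hk⟩ : ∃ k, A (n+1) = k + 1 := ⟨A (n+1) - 1, by omega⟩
  have h3 : a (n+2) * q (n+1) + q n = q n * k + q n := by
    rw [← hq n, h2, hk]; ring
  have h4 : a (n+2) * q (n+1) = q n * k := by omega
  exact (cop n).dvd_of_dvd_mul_right ⟨k, h4⟩
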